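/- arXiv:2310.00903 — 6 statements merged into one kernel-verified Lean document; each statement's English description precedes it below -/
import Mathlib

section
/- The A-module F = C^{Zⁿ} of all complex-valued functions on Zⁿ is an injective A-module, where A = C[σ₁, σ₁⁻¹, ..., σₙ, σₙ⁻¹] acts by shifts. -/
noncomputable section

/-- `A n` is the Laurent polynomial ring `ℂ[σ₁,σ₁⁻¹,…,σₙ,σₙ⁻¹]`. -/
abbrev A (n : ℕ) : Type := AddMonoidAlgebra ℂ (Fin n → ℤ)

/-- `F n` is the space of all complex valued functions on the lattice `ℤⁿ`. -/
abbrev F (n : ℕ) : Type := (Fin n → ℤ) → ℂ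

/-- The shift `σ^y` acts on functions by translation: `(σ^y f)(x) = f (x + y)`. -/
def shiftHom (n : ℕ) : Multiplicative (Fin n → ℤ) →* Module.End ℂ (F n) where
  toFun y :=
    { toFun := fun f x => f (x + y.toAdd)
      map_add' := fun _ _ => rfl
      map_smul' := fun _ _ => rfl }
  map_one' := by ext f x; simp
  map_mul' y w := by
    ext f x
    simp [Module.End.mul_apply, add_assoc]

/-- The `A`-module structure on `F` by shifts. -/
instance moduleAF (n : ℕ) : Module (A n) (F n) :=
  Module.compHom (F n)
    ((AddMonoidAlgebra.lift ℂ (Module.End ℂ (F n)) (Fin n → ℤ) (shiftHom n)).toRingHom)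

lemma smul_def' {n : ℕ} (a : A n) (f : F n) (x : Fin n → ℤ) :
    (a • f) x = a.coeff.sum fun y c => c * f (x + y) := by
  show (AddMonoidAlgebra.lift ℂ (Module.End ℂ (F n)) (Fin n → ℤ) (shiftHom n)) a f x = _
  rw [AddMonoidAlgebra.lift_apply]
  simp [Finsupp.sum, shiftHom, smul_eq_mul]

lemma single_one_mul' {n : ℕ} (x : Fin n → ℤ) (a : A n) :
    (AddMonoidAlgebra.single x 1 : A n) * a
      = a.coeff.sum fun y c => AddMonoidAlgebra.single (x + y) c := by
  conv_lhs => rw [← AddMonoidAlgebra.sum_coeff_single a]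
  rw [Finsupp.sum, Finset.mul_sum, Finsupp.sum]
  refine Finset.sum_congr rfl fun y _ => ?_
  rw [AddMonoidAlgebra.single_mul_single, one_mul]

/-- `F = ℂ^{ℤⁿ}` with the shift action is an injective `A`-module. -/
theorem functions_injective_module (n : ℕ) : Module.Injective (A n) (F n) := by
  constructor
  intro X Y _ _ _ _ f hf g
  letI : Module ℂ X := Module.compHom X (algebraMap ℂ (A n))
  letI : Module ℂ Y := Module.compHom Y (algebraMap ℂ (A n))
  haveI tX : IsScalarTower ℂ (A n) X := ⟨fun c a x => by
    show (c • a) • x = ((algebraMap ℂ (A n)) c) • a • x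
    rw [Algebra.smul_def, mul_smul]⟩
  haveI tY : IsScalarTower ℂ (A n) Y := ⟨fun c a y => by
    show (c • a) • y = ((algebraMap ℂ (A n)) c) • a • y
    rw [Algebra.smul_def, mul_smul]⟩
  -- `ψ x = (g x) 0` is ℂ-linear
  have key : ∀ (c : ℂ) (x : X), g ((algebraMap ℂ (A n)) c • x) 0 = c * g x 0 := by
    intro c x
    rw [map_smul, smul_def']
    show (Finsupp.single (0 : Fin n → ℤ) c).sum (fun y d => d * g x (0 + y)) = _
    rw [Finsupp.sum_single_index (by simp)]
    simp
  let ψ : X →ₗ[ℂ] ℂ :=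
    { toFun := fun x => g x 0
      map_add' := fun x y => by show g (x + y) 0 = g x 0 + g y 0; rw [map_add]; rfl
      map_smul' := fun c x => key c x }
  -- extend ψ along f using a ℂ-linear retraction
  obtain ⟨r, hr⟩ := (f.restrictScalars ℂ).exists_leftInverse_of_injective
    (LinearMap.ker_eq_bot.mpr hf)
  let φ : Y →ₗ[ℂ] ℂ := ψ.comp r
  have hφf : ∀ x : X, φ (f x) = g x 0 := fun x => by
    have := LinearMap.congr_fun hr x
    simp only [LinearMap.comp_apply, LinearMap.id_apply] at this
    show ψ (r (f x)) = _
    rw [show r (f x) = x from this]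
    rfl
  refine ⟨{ toFun := fun y x => φ ((AddMonoidAlgebra.single x 1 : A n) • y)
            map_add' := fun y z => by
              funext x; simp [smul_add]
            map_smul' := fun a y => by
              funext x
              show φ ((AddMonoidAlgebra.single x 1 : A n) • a • y)
                = (a • fun x' => φ ((AddMonoidAlgebra.single x' 1 : A n) • y)) x
              rw [smul_def', ← mul_smul, single_one_mul', Finsupp.sum, Finsupp.sum,
                Finset.sum_smul, map_sum]
              refine Finset.sum_congr rfl fun y' _ => ?_
              have : (AddMonoidAlgebra.single (x + y') (a.coeff y') : A n)
                  = a.coeff y' • AddMonoidAlgebra.single (x + y') 1 := by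
                rw [AddMonoidAlgebra.smul_single', mul_one]
              rw [this, smul_assoc, map_smul, smul_eq_mul] }, ?_⟩
  intro x
  funext x₀
  show φ ((AddMonoidAlgebra.single x₀ 1 : A n) • f x) = g x x₀
  rw [← map_smul, hφf, map_smul, smul_def']
  show (Finsupp.single x₀ (1 : ℂ)).sum (fun y c => c * g x (0 + y)) = _
  rw [Finsupp.sum_single_index (by simp)]
  simp
end
end

section
/- The A-module F = C^{Zⁿ} is a cogenerator: for every nonzero A-module M, Hom_A(M, F) ≠ 0. -/
noncomputable section

/-- `F = ℂ^{ℤⁿ}` with the shift action is a cogenerator for the category of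
`A`-modules: every nonzero `A`-module admits a nonzero `A`-linear map to `F`. -/
theorem functions_cogenerator (n : ℕ) (M : Type) [AddCommGroup M] [Module (A n) M]
    (hM : Nontrivial M) : ∃ φ : M →ₗ[A n] F n, φ ≠ 0 := by
  letI instC : Module ℂ M := Module.compHom M (algebraMap ℂ (A n))
  have hsm : ∀ (c : ℂ) (m : M), c • m = (algebraMap ℂ (A n) c) • m := fun _ _ => rfl
  have tower : ∀ (c : ℂ) (r : A n) (m : M), (c • r) • m = c • (r • m) := by
    intro c r m
    rw [Algebra.smul_def, mul_smul, hsm]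
  obtain ⟨m₀, hm₀⟩ := exists_ne (0 : M)
  obtain ⟨lam, hlam⟩ : ∃ lam : M →ₗ[ℂ] ℂ, lam m₀ ≠ 0 := by
    by_contra h
    push_neg at h
    exact hm₀ ((Module.forall_dual_apply_eq_zero_iff ℂ m₀).1 h)
  refine ⟨{ toFun := fun m x => lam ((AddMonoidAlgebra.single x (1:ℂ) : A n) • m)
            map_add' := fun m m' => by
              funext x
              show lam (_ • (m + m')) = lam _ + lam _
              rw [smul_add, map_add]
            map_smul' := fun a m => ?_ }, ?_⟩
  · funext x
    show lam ((AddMonoidAlgebra.single x (1:ℂ) : A n) • a • m)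
        = (a • fun x => lam ((AddMonoidAlgebra.single x (1:ℂ) : A n) • m)) x
    rw [smul_def', ← mul_smul]
    have key : (AddMonoidAlgebra.single x (1:ℂ) : A n) * a
        = a.coeff.sum fun y c => AddMonoidAlgebra.single (x + y) c := by
      conv_lhs => rw [← a.sum_single]
      rw [Finsupp.mul_sum]
      exact Finsupp.sum_congr fun y _ => by
        rw [AddMonoidAlgebra.single_mul_single, one_mul]
    rw [key, Finsupp.sum, Finset.sum_smul, map_sum, Finsupp.sum]
    refine Finset.sum_congr rfl fun y _ => ?_
    have : (AddMonoidAlgebra.single (x + y) (a.coeff y) : A n)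
        = a.coeff y • AddMonoidAlgebra.single (x + y) (1:ℂ) := by
      rw [AddMonoidAlgebra.smul_single, smul_eq_mul, mul_one]
    rw [this, tower, map_smul, smul_eq_mul]
  · intro h
    have h0 := congrFun (congrArg (fun φ => φ m₀) (congrArg DFunLike.coe h)) 0
    apply hlam
    have : (AddMonoidAlgebra.single (0 : Fin n → ℤ) (1:ℂ) : A n) = 1 := rfl
    have h0' : lam ((AddMonoidAlgebra.single (0 : Fin n → ℤ) (1:ℂ) : A n) • m₀) = 0 := h0
    rwa [this, one_smul] at h0'
end
end

section
/- Let G be a finite group acting C-linearly on the Laurent polynomial ring A by algebra automorphisms, coordinate-wise on A^k, and let P ⊊ A^k be a proper G-invariant submodule. Then the space of G-invariant solutions Ker_F(P)^G = {f ∈ Ker_F(P) : g·f = f for all g ∈ G} is nonzero. -/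
noncomputable section

/-- The extension of a function `f : ℤⁿ → ℂ` to a linear functional on `A`,
via the monomial basis: `fext f a = ∑_y a_y f(y)`. -/
def fext {n : ℕ} (f : F n) (a : A n) : ℂ := a.coeff.sum fun y c => c * f y

def Tl (n k : ℕ) (e : A n ≃ₐ[ℂ] A n) : (Fin k → A n) →ₗ[ℂ] (Fin k → A n) where
  toFun v := fun j => e (v j)
  map_add' u v := by ext j; simp
  map_smul' c v := by ext j; simp

@[simp] lemma Tl_apply {n k : ℕ} (e : A n ≃ₐ[ℂ] A n) (v : Fin k → A n) (j : Fin k) :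
    Tl n k e v j = e (v j) := rfl

lemma lin_sum {n : ℕ} (L : A n →ₗ[ℂ] ℂ) (a : A n) :
    L a = a.coeff.sum fun y c => c * L (AddMonoidAlgebra.single y 1) := by
  conv_lhs => rw [← AddMonoidAlgebra.sum_coeff_single a]
  rw [map_finsuppSum]
  refine Finsupp.sum_congr fun y hy => ?_
  rw [show AddMonoidAlgebra.single y (a.coeff y) = a.coeff y • AddMonoidAlgebra.single y (1:ℂ) by
    rw [AddMonoidAlgebra.smul_single', mul_one], map_smul, smul_eq_mul]

/-- If a proper submodule `P ⊊ A^k` is invariant under a finite group `G` of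
`ℂ`-algebra automorphisms of `A` (acting coordinate-wise on `A^k`), then the
system of difference equations defined by `P` admits a nonzero `G`-symmetric
solution, i.e. a nonzero solution fixed by the dual action of `G`. -/
theorem exists_symmetric_solution (n k : ℕ)
    (G : Subgroup (A n ≃ₐ[ℂ] A n)) [Finite G]
    (P : Submodule (A n) (Fin k → A n)) (hP : P ≠ ⊤)
    (hinv : ∀ g ∈ G, ∀ p ∈ P, (fun j => g (p j)) ∈ P) :
    ∃ f : Fin k → F n,
      (∀ p ∈ P, (∑ j, p j • f j) = 0) ∧ f ≠ 0 ∧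
      (∀ g ∈ G, ∀ (j : Fin k) (a : A n), fext (f j) (g a) = fext (f j) a) := by
  classical
  have : Fintype G := Fintype.ofFinite _
  set X : Set (Fin k → A n) :=
    {x | ∃ g ∈ G, ∃ v : Fin k → A n, x = (fun j => g (v j)) - v} with hX
  set W : Submodule ℂ (Fin k → A n) := P.restrictScalars ℂ ⊔ Submodule.span ℂ X with hWdef
  set Sl : (Fin k → A n) →ₗ[ℂ] (Fin k → A n) := ∑ g : G, Tl n k (g : A n ≃ₐ[ℂ] A n) with hSl
  have hSlapp : ∀ v, Sl v = ∑ g : G, (fun j => (g : A n ≃ₐ[ℂ] A n) (v j)) := by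
    intro v; simp [hSl, LinearMap.sum_apply]; rfl
  -- Sl maps W into P
  have hSlW : ∀ w ∈ W, Sl w ∈ P := by
    intro w hw
    have : W ≤ Submodule.comap Sl (P.restrictScalars ℂ) := by
      rw [hWdef, sup_le_iff]
      constructor
      · intro p hp
        simp only [Submodule.mem_comap, Submodule.restrictScalars_mem] at hp ⊢
        rw [hSlapp]
        refine Submodule.sum_mem _ fun g _ => ?_
        exact hinv g g.2 p hp
      · rw [Submodule.span_le]
        rintro _ ⟨g, hg, v, rfl⟩
        simp only [SetLike.mem_coe, Submodule.mem_comap, Submodule.restrictScalars_mem]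
        have : Sl ((fun j => g (v j)) - v) = 0 := by
          rw [map_sub]
          have h1 : Sl (fun j => g (v j)) = ∑ g' : G, Tl n k (g' : A n ≃ₐ[ℂ] A n)
              (Tl n k g v) := by rw [hSlapp]; rfl
          rw [h1, hSlapp v, sub_eq_zero]
          refine Fintype.sum_equiv (Equiv.mulRight (⟨g, hg⟩ : G)) _ _ fun g' => ?_
          ext j
          simp [Equiv.mulRight]
        rw [this]; exact Submodule.zero_mem _
    exact this hw
  -- W is proper
  have hWtop : W ≠ ⊤ := by
    intro htop
    apply hP
    have hdelta : ∀ j : Fin k, (Pi.single j 1 : Fin k → A n) ∈ P := by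
      intro j
      have hmem : (Pi.single j 1 : Fin k → A n) ∈ W := htop ▸ Submodule.mem_top
      have hfix : Sl (Pi.single j 1) = (Fintype.card G : ℂ) • (Pi.single j 1 : Fin k → A n) := by
        rw [hSlapp]
        have : ∀ g : G, (fun i => (g : A n ≃ₐ[ℂ] A n) ((Pi.single j 1 : Fin k → A n) i))
            = (Pi.single j 1 : Fin k → A n) := by
          intro g; ext i
          rcases eq_or_ne i j with rfl | hij
          · simp
          · simp [Pi.single_eq_of_ne hij]
        simp only [this]
        rw [Finset.sum_const, Finset.card_univ, Nat.cast_smul_eq_nsmul]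
      have h1 : (Fintype.card G : ℂ) • (Pi.single j 1 : Fin k → A n) ∈ P := by
        rw [← hfix]; exact hSlW _ hmem
      have hcard : (Fintype.card G : ℂ) ≠ 0 := by
        exact_mod_cast Fintype.card_ne_zero
      have := (P.restrictScalars ℂ).smul_mem ((Fintype.card G : ℂ)⁻¹) h1
      rwa [smul_smul, inv_mul_cancel₀ hcard, one_smul, Submodule.restrictScalars_mem] at this
    rw [Submodule.eq_top_iff']
    intro v
    have hv : v = ∑ j, (v j) • (Pi.single j 1 : Fin k → A n) := by
      have : ∀ j, (v j) • (Pi.single j 1 : Fin k → A n) = Pi.single j (v j) := by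
        intro j; ext i
        rcases eq_or_ne i j with rfl | hij
        · simp
        · simp [Pi.single_eq_of_ne hij]
      simp only [this]
      rw [Finset.univ_sum_single]
    rw [hv]
    exact Submodule.sum_mem _ fun j _ => Submodule.smul_mem _ _ (hdelta j)
  -- a nonzero functional vanishing on W
  obtain ⟨x₀, hx₀⟩ : ∃ x, x ∉ W := by
    by_contra h
    push_neg at h
    exact hWtop (Submodule.eq_top_iff'.mpr h)
  have hq : W.mkQ x₀ ≠ 0 := by
    rw [Submodule.mkQ_apply, ne_eq, Submodule.Quotient.mk_eq_zero]; exact hx₀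
  obtain ⟨ψ, hψ⟩ : ∃ ψ : Module.Dual ℂ ((Fin k → A n) ⧸ W), ψ (W.mkQ x₀) ≠ 0 := by
    by_contra h
    push_neg at h
    exact hq ((Module.forall_dual_apply_eq_zero_iff ℂ _).mp h)
  set Φ : (Fin k → A n) →ₗ[ℂ] ℂ := ψ ∘ₗ W.mkQ with hPhi
  have hΦW : ∀ w ∈ W, Φ w = 0 := by
    intro w hw
    simp only [hPhi, LinearMap.comp_apply, Submodule.mkQ_apply,
      (Submodule.Quotient.mk_eq_zero W).mpr hw, map_zero]
  have hΦP : ∀ p ∈ P, Φ p = 0 := by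
    intro p hp
    refine hΦW p ?_
    rw [hWdef]
    exact Submodule.mem_sup_left (by simpa using hp)
  have hΦg : ∀ g ∈ G, ∀ v : Fin k → A n, Φ (fun j => g (v j)) = Φ v := by
    intro g hg v
    have : ((fun j => g (v j)) - v) ∈ W := by
      rw [hWdef]
      exact Submodule.mem_sup_right (Submodule.subset_span ⟨g, hg, v, rfl⟩)
    have h0 := hΦW _ this
    rw [map_sub, sub_eq_zero] at h0
    exact h0
  have hΦx₀ : Φ x₀ ≠ 0 := hψ
  -- the solution
  set f : Fin k → F n := fun j x => Φ (Pi.single j (AddMonoidAlgebra.single x (1:ℂ) : A n)) with hf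
  have hLf : ∀ (j : Fin k) (a : A n),
      Φ (Pi.single j a) = a.coeff.sum fun y c => c * f j y := by
    intro j a
    have := lin_sum (Φ ∘ₗ LinearMap.single ℂ (fun _ : Fin k => A n) j) a
    simpa [hf] using this
  refine ⟨f, ?_, ?_, ?_⟩
  · -- solves the system
    intro p hp
    funext x
    have hsm : ∀ j : Fin k, (p j • f j) x
        = Φ (Pi.single j ((AddMonoidAlgebra.single x (1:ℂ) : A n) * p j)) := by
      intro j
      rw [smul_def']
      have := lin_sum ((Φ ∘ₗ LinearMap.single ℂ (fun _ : Fin k => A n) j)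
        ∘ₗ LinearMap.mulLeft ℂ (AddMonoidAlgebra.single x (1:ℂ) : A n)) (p j)
      simp only [LinearMap.comp_apply, LinearMap.mulLeft_apply, LinearMap.coe_single] at this
      rw [this]
      refine Finsupp.sum_congr fun y hy => ?_
      simp only [hf]
      congr 2
      have hm := AddMonoidAlgebra.single_mul_single x y (1:ℂ) (1:ℂ)
      rw [one_mul] at hm
      exact congrArg (fun z => Pi.single j z) hm.symm
    have hx : (∑ j, p j • f j) x = ∑ j, (p j • f j) x := by
      simp
    rw [hx]
    simp only [hsm]
    have hsum : ∑ j, Φ (Pi.single j ((AddMonoidAlgebra.single x (1:ℂ) : A n) * p j))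
        = Φ ((AddMonoidAlgebra.single x (1:ℂ) : A n) • p) := by
      rw [← map_sum]
      congr 1
      have : ∀ j : Fin k, (AddMonoidAlgebra.single x (1:ℂ) : A n) * p j
          = ((AddMonoidAlgebra.single x (1:ℂ) : A n) • p) j := by
        intro j; simp
      simp only [this]
      exact Finset.univ_sum_single _
    rw [hsum]
    have : (AddMonoidAlgebra.single x (1:ℂ) : A n) • p ∈ P := P.smul_mem _ hp
    rw [hΦP _ this]
    rfl
  · -- nonzero
    intro h0
    apply hΦx₀
    have hx : x₀ = ∑ j, Pi.single j (x₀ j) := (Finset.univ_sum_single x₀).symm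
    rw [hx, map_sum]
    refine Finset.sum_eq_zero fun j _ => ?_
    rw [hLf]
    simp [h0, Finsupp.sum]
  · -- symmetry
    intro g hg j a
    have h1 : fext (f j) a = Φ (Pi.single j a) := by
      rw [hLf]; rfl
    have h2 : fext (f j) (g a) = Φ (Pi.single j (g a)) := by
      rw [hLf]; rfl
    rw [h1, h2]
    have h3 : (Pi.single j (g a) : Fin k → A n)
        = fun i => g ((Pi.single j a : Fin k → A n) i) := by
      funext i
      rcases eq_or_ne i j with rfl | hij
      · simp
      · simp [Pi.single_eq_of_ne hij]
    rw [h3, hΦg g hg]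
end
end

section
/- Let G be a finite subgroup of (C*)ⁿ acting on A = C[σ₁,σ₁⁻¹,...,σₙ,σₙ⁻¹] by σᵢ ↦ ζᵢσᵢ. Then A is a free module over the fixed subalgebra A^G of rank equal to |G|. -/
noncomputable section

/-- The monoid hom sending `σ^y` to `(∏ᵢ ζᵢ^{yᵢ}) σ^y`. -/
def homHom {n : ℕ} (ζ : Fin n → ℂˣ) : Multiplicative (Fin n → ℤ) →* A n where
  toFun y := AddMonoidAlgebra.single y.toAdd ((∏ i, ζ i ^ (y.toAdd i) : ℂˣ) : ℂ)
  map_one' := by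
    simp [AddMonoidAlgebra.one_def]
  map_mul' y w := by
    simp [AddMonoidAlgebra.single_mul_single, zpow_add, Finset.prod_mul_distrib]

/-- The homothety algebra automorphism (as an algebra endomorphism)
`σᵢ ↦ ζᵢσᵢ` of the Laurent polynomial ring, i.e. `σ^x ↦ ζ^x σ^x`. -/
def actU {n : ℕ} (ζ : Fin n → ℂˣ) : A n →ₐ[ℂ] A n :=
  AddMonoidAlgebra.lift ℂ (A n) (Fin n → ℤ) (homHom ζ)

/-- The fixed subalgebra `A^G` of the homothety action of `G ⊆ (ℂ*)ⁿ`. -/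
def fixedSubalg (n : ℕ) (G : Subgroup (Fin n → ℂˣ)) : Subalgebra ℂ (A n) where
  carrier := {a | ∀ ζ ∈ G, actU ζ a = a}
  add_mem' := by intro a b ha hb ζ hζ; simp [map_add, ha ζ hζ, hb ζ hζ]
  mul_mem' := by intro a b ha hb ζ hζ; simp [map_mul, ha ζ hζ, hb ζ hζ]
  algebraMap_mem' := by
    intro c ζ hζ
    simp only [Algebra.algebraMap_eq_smul_one, map_smul, map_one]

namespace LaurentAux

set_option linter.unusedSectionVars false

variable {n : ℕ}

/-- The pairing `χ x ζ = ∏ ζ_i ^ x_i`. -/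
def χ (x : Fin n → ℤ) (ζ : Fin n → ℂˣ) : ℂˣ := ∏ i, ζ i ^ x i

lemma χ_add (x y : Fin n → ℤ) (ζ : Fin n → ℂˣ) : χ (x + y) ζ = χ x ζ * χ y ζ := by
  simp [χ, zpow_add, Finset.prod_mul_distrib]

lemma χ_neg (x : Fin n → ℤ) (ζ : Fin n → ℂˣ) : χ (-x) ζ = (χ x ζ)⁻¹ := by
  simp [χ, zpow_neg]

lemma χ_zero (ζ : Fin n → ℂˣ) : χ 0 ζ = 1 := by simp [χ]

lemma χ_one (x : Fin n → ℤ) : χ x (1 : Fin n → ℂˣ) = 1 := by simp [χ]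

lemma χ_mul (x : Fin n → ℤ) (ζ ζ' : Fin n → ℂˣ) : χ x (ζ * ζ') = χ x ζ * χ x ζ' := by
  simp [χ, mul_zpow, Finset.prod_mul_distrib]

lemma χ_single (ζ : Fin n → ℂˣ) (i : Fin n) : χ (Pi.single i 1) ζ = ζ i := by
  rw [χ, Finset.prod_eq_single i (fun j _ hj => by simp [Pi.single_eq_of_ne hj]) (by simp)]
  simp

variable (G : Subgroup (Fin n → ℂˣ))

/-- The lattice of exponents invariant under all of `G`. -/
def L : AddSubgroup (Fin n → ℤ) where
  carrier := {x | ∀ ζ ∈ G, χ x ζ = 1}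
  zero_mem' := fun ζ _ => χ_zero ζ
  add_mem' := fun hx hy ζ hζ => by
    rw [χ_add, hx ζ hζ, hy ζ hζ, mul_one]
  neg_mem' := fun hx ζ hζ => by
    rw [χ_neg, hx ζ hζ, inv_one]

abbrev Q := (Fin n → ℤ) ⧸ L G

/-- The character of `G` attached to a coset of exponents. -/
def F₁ : Q G → (G →* ℂˣ) := fun q =>
  Quotient.liftOn' q
    (fun x => { toFun := fun ζ => χ x ζ.1
                map_one' := χ_one x
                map_mul' := fun ζ ζ' => χ_mul x ζ.1 ζ'.1 })
    (by
      intro x y hxy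
      have h : -x + y ∈ L G := QuotientAddGroup.leftRel_apply.mp hxy
      ext ζ
      have h2 : χ y ζ.1 = χ x ζ.1 * χ (-x + y) ζ.1 := by
        rw [← χ_add]; congr 1; abel
      simp only [MonoidHom.coe_mk, OneHom.coe_mk]
      rw [h2, h ζ.1 ζ.2, mul_one])

lemma F₁_mk (x : Fin n → ℤ) (ζ : G) : F₁ G (QuotientAddGroup.mk x) ζ = χ x ζ.1 := rfl

lemma F₁_add (q q' : Q G) (ζ : G) : F₁ G (q + q') ζ = F₁ G q ζ * F₁ G q' ζ := by
  obtain ⟨x, rfl⟩ := QuotientAddGroup.mk_surjective q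
  obtain ⟨y, rfl⟩ := QuotientAddGroup.mk_surjective q'
  rw [← QuotientAddGroup.mk_add]
  simp only [F₁_mk, χ_add]

lemma F₁_injective : Function.Injective (F₁ G) := by
  intro q q' h
  obtain ⟨x, rfl⟩ := QuotientAddGroup.mk_surjective q
  obtain ⟨y, rfl⟩ := QuotientAddGroup.mk_surjective q'
  rw [QuotientAddGroup.eq]
  intro ζ hζ
  have h1 := DFunLike.congr_fun h (⟨ζ, hζ⟩ : G)
  rw [F₁_mk, F₁_mk] at h1
  rw [χ_add, χ_neg, h1, inv_mul_cancel]

variable [Finite G]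

instance : HasEnoughRootsOfUnity ℂ (Monoid.exponent G) := by
  have : NeZero ((Monoid.exponent G : ℂ)) :=
    ⟨Nat.cast_ne_zero.mpr Monoid.exponent_ne_zero_of_finite⟩
  infer_instance

lemma finite_Q : Finite (Q G) := by
  have e : Nonempty ((G →* ℂˣ) ≃* G) :=
    CommGroup.monoidHom_mulEquiv_of_hasEnoughRootsOfUnity G ℂ
  have : Finite (G →* ℂˣ) := Finite.of_equiv G e.some.symm.toEquiv
  exact Finite.of_injective _ (F₁_injective G)

/-- The character of `Q` attached to an element of `G`. -/
def F₂ : G → (Multiplicative (Q G) →* ℂˣ) := fun ζ =>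
  { toFun := fun q => F₁ G q.toAdd ζ
    map_one' := by
      have h : F₁ G (0 : Q G) ζ = χ (0 : Fin n → ℤ) ζ.1 := rfl
      simp [h, χ_zero]
    map_mul' := fun q q' => F₁_add G q.toAdd q'.toAdd ζ }

lemma F₂_injective : Function.Injective (F₂ G) := by
  intro ζ ζ' h
  ext i
  have h0 := DFunLike.congr_fun h (Multiplicative.ofAdd
    (QuotientAddGroup.mk (Pi.single i (1:ℤ)) : Q G))
  have h1 : χ (Pi.single i (1:ℤ)) ζ.1 = χ (Pi.single i (1:ℤ)) ζ'.1 := h0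
  rw [χ_single, χ_single] at h1
  exact congrArg Units.val h1

lemma card_Q : Nat.card (Q G) = Nat.card G := by
  have hQfin : Finite (Q G) := finite_Q G
  have e1 : Nonempty ((G →* ℂˣ) ≃* G) :=
    CommGroup.monoidHom_mulEquiv_of_hasEnoughRootsOfUnity G ℂ
  have hMQ : Finite (Multiplicative (Q G)) := hQfin
  have : HasEnoughRootsOfUnity ℂ (Monoid.exponent (Multiplicative (Q G))) := by
    have : NeZero ((Monoid.exponent (Multiplicative (Q G)) : ℂ)) :=
      ⟨Nat.cast_ne_zero.mpr Monoid.exponent_ne_zero_of_finite⟩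
    infer_instance
  have e2 : Nonempty ((Multiplicative (Q G) →* ℂˣ) ≃* Multiplicative (Q G)) :=
    CommGroup.monoidHom_mulEquiv_of_hasEnoughRootsOfUnity (Multiplicative (Q G)) ℂ
  have : Finite (G →* ℂˣ) := Finite.of_equiv G e1.some.symm.toEquiv
  have : Finite (Multiplicative (Q G) →* ℂˣ) :=
    Finite.of_equiv _ e2.some.symm.toEquiv
  refine le_antisymm ?_ ?_
  · calc Nat.card (Q G) ≤ Nat.card (G →* ℂˣ) :=
          Nat.card_le_card_of_injective _ (F₁_injective G)
      _ = Nat.card G := Nat.card_congr e1.some.toEquiv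
  · calc Nat.card G ≤ Nat.card (Multiplicative (Q G) →* ℂˣ) :=
          Nat.card_le_card_of_injective _ (F₂_injective G)
      _ = Nat.card (Q G) := Nat.card_congr e2.some.toEquiv

/-! ### Module part -/

/-- Monomial, as an element of `A n` (to pin down the correct `Mul` instance). -/
def sg (x : Fin n → ℤ) (c : ℂ) : A n := AddMonoidAlgebra.single x c

/-- Coefficient of a Laurent "polynomial". -/
def coeff (a : A n) : (Fin n → ℤ) → ℂ := fun x => a.coeff x

lemma sg_mul_sg (x y : Fin n → ℤ) (b d : ℂ) :
    sg x b * sg y d = sg (x + y) (b * d) :=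
  AddMonoidAlgebra.single_mul_single x y b d

lemma coeff_mul_sg (f : A n) (r : ℂ) (x y : Fin n → ℤ) :
    coeff (f * sg x r) y = coeff f (y - x) * r :=
  AddMonoidAlgebra.coeff_mul_single_apply f r x y

lemma coeff_sg (x y : Fin n → ℤ) (c : ℂ) :
    coeff (sg x c) y = if x = y then c else 0 := by
  show (Finsupp.single x c : (Fin n → ℤ) →₀ ℂ) y = _; exact Finsupp.single_apply

lemma sg_zero_one : sg (0 : Fin n → ℤ) 1 = 1 := (AddMonoidAlgebra.one_def).symm

lemma support_sg_subset (x : Fin n → ℤ) (c : ℂ) :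
    (sg x c).coeff.support ⊆ {x} := Finsupp.support_single_subset

lemma actU_sg (ζ : Fin n → ℂˣ) (x : Fin n → ℤ) (c : ℂ) :
    actU ζ (sg x c) = sg x (c * (χ x ζ : ℂ)) := by
  have h2 : actU ζ (sg x c) = c • (homHom ζ) (Multiplicative.ofAdd x) :=
    AddMonoidAlgebra.lift_single (homHom ζ) x c
  rw [h2]
  show c • (sg x ((χ x ζ : ℂˣ) : ℂ)) = _
  show c • (AddMonoidAlgebra.single x ((χ x ζ : ℂˣ) : ℂ) : A n) = _
  rw [AddMonoidAlgebra.smul_single, smul_eq_mul]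
  rfl

lemma actU_coeff (ζ : Fin n → ℂˣ) (a : A n) (x : Fin n → ℤ) :
    coeff (actU ζ a) x = coeff a x * (χ x ζ : ℂ) := by
  induction a using AddMonoidAlgebra.induction_linear with
  | zero => simp [coeff]
  | add f g hf hg =>
      rw [map_add]
      show coeff (actU ζ f) x + coeff (actU ζ g) x = (coeff f x + coeff g x) * _
      rw [hf, hg, add_mul]
  | single y c =>
      rw [show (AddMonoidAlgebra.single y c : A n) = sg y c from rfl, actU_sg,
        coeff_sg, coeff_sg]
      split_ifs with h
      · subst h; rfl
      · rw [zero_mul]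

lemma mem_fixed_iff (a : A n) :
    a ∈ fixedSubalg n G ↔ ∀ x ∈ a.coeff.support, x ∈ L G := by
  constructor
  · intro h x hx ζ hζ
    have h1 := congrArg (fun b => coeff b x) (h ζ hζ)
    simp only [actU_coeff] at h1
    have hx0 : coeff a x ≠ 0 := Finsupp.mem_support_iff.mp hx
    have h2 : coeff a x * (χ x ζ : ℂ) = coeff a x * 1 := by rw [mul_one]; exact h1
    exact Units.ext (mul_left_cancel₀ hx0 h2)
  · intro h ζ hζ
    have key : (actU ζ a).coeff = a.coeff := by
      ext x
      rw [show (actU ζ a).coeff x = coeff (actU ζ a) x from rfl,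
        actU_coeff]
      by_cases hx : coeff a x = 0
      · rw [show a.coeff x = coeff a x from rfl, hx, zero_mul]
      · rw [h x (Finsupp.mem_support_iff.mpr hx) ζ hζ, Units.val_one, mul_one]; rfl
    exact AddMonoidAlgebra.coeff_injective key

/-- The candidate basis: monomials indexed by coset representatives. -/
def bas : Q G → A n := fun q => sg q.out 1

lemma sg_mem_fixed (l : Fin n → ℤ) (c : ℂ) (hl : l ∈ L G) :
    sg l c ∈ fixedSubalg n G := by
  rw [mem_fixed_iff]
  intro y hy
  have h := support_sg_subset l c hy
  rw [Finset.mem_singleton] at h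
  rwa [h]

lemma span_bas : ⊤ ≤ Submodule.span (fixedSubalg n G) (Set.range (bas G)) := by
  intro a _
  induction a using AddMonoidAlgebra.induction with
  | zero => exact Submodule.zero_mem _
  | single_add x c f hxf hc hf =>
      refine Submodule.add_mem _ ?_ (hf trivial)
      set q : Q G := QuotientAddGroup.mk x with hq
      have hout : (QuotientAddGroup.mk q.out : Q G) = q := QuotientAddGroup.out_eq' q
      set l : Fin n → ℤ := x - q.out with hl
      have hlL : l ∈ L G := by
        have h0 : (QuotientAddGroup.mk l : Q G) = 0 := by
          rw [hl, QuotientAddGroup.mk_sub, hout, hq, sub_self]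
        exact (QuotientAddGroup.eq_zero_iff l).mp h0
      have key : sg x c
          = (⟨sg l c, sg_mem_fixed G l c hlL⟩ : fixedSubalg n G) • bas G q := by
        show sg x c = sg l c * sg q.out 1
        rw [sg_mul_sg, mul_one, hl, sub_add_cancel]
      rw [show (AddMonoidAlgebra.single x c : A n) = sg x c from rfl, key]
      exact Submodule.smul_mem _ _ (Submodule.subset_span ⟨q, rfl⟩)

lemma support_fixed_mul_sg (c : A n) (hc : c ∈ fixedSubalg n G) (y : Fin n → ℤ)
    (x : Fin n → ℤ) (hx : coeff (c * sg y 1) x ≠ 0) :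
    (QuotientAddGroup.mk x : Q G) = QuotientAddGroup.mk y := by
  rw [coeff_mul_sg, mul_one] at hx
  have h1 : x - y ∈ L G := (mem_fixed_iff G c).mp hc _ (Finsupp.mem_support_iff.mpr hx)
  rw [QuotientAddGroup.eq]
  have h2 : -(x - y) ∈ L G := neg_mem h1
  rwa [show -x + y = -(x - y) by abel]

/-- `A n → Finsupp`, as an additive hom (it is the identity up to defeq). -/
def toF : A n →+ ((Fin n → ℤ) →₀ ℂ) :=
  AddMonoidHom.mk' (fun a => a.coeff) (fun _ _ => rfl)

lemma linIndep_bas : LinearIndependent (fixedSubalg n G) (bas G) := by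
  classical
  have hfin : Finite (Q G) := finite_Q G
  have := Fintype.ofFinite (Q G)
  rw [Fintype.linearIndependent_iff]
  intro g hg q₀
  set p : (Fin n → ℤ) → Prop := fun x => (QuotientAddGroup.mk x : Q G) = q₀ with hp
  have hfil : ∀ q : Q G, Finsupp.filter p (toF ((g q : A n) * bas G q))
      = if q = q₀ then toF ((g q : A n) * bas G q) else 0 := by
    intro q
    split_ifs with h
    · subst h
      rw [Finsupp.filter_eq_self_iff]
      intro x hx
      have h1 := support_fixed_mul_sg G (g q) (g q).2 q.out x hx
      show (QuotientAddGroup.mk x : Q G) = q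
      rw [h1, QuotientAddGroup.out_eq']
    · rw [Finsupp.filter_eq_zero_iff]
      intro x hpx
      by_contra hx
      have h1 := support_fixed_mul_sg G (g q) (g q).2 q.out x hx
      rw [QuotientAddGroup.out_eq'] at h1
      exact h (h1 ▸ hpx)
  have hsum : (∑ q, Finsupp.filter p (toF ((g q : A n) * bas G q))) = 0 := by
    have hcomm : (∑ q, Finsupp.filter p (toF ((g q : A n) * bas G q)))
        = Finsupp.filter p (∑ q, toF ((g q : A n) * bas G q)) :=
      (map_sum (Finsupp.filterAddHom (M := ℂ) p)
        (fun q => toF ((g q : A n) * bas G q)) Finset.univ).symm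
    have h1 : (∑ q, toF ((g q : A n) * bas G q)) = 0 := by
      rw [← map_sum toF (fun q => (g q : A n) * bas G q) Finset.univ]
      have h0 : (∑ q, (g q : A n) * bas G q) = 0 := by
        rw [← hg]
        rfl
      rw [h0, map_zero]
    rw [hcomm, h1]
    exact Finsupp.filter_zero p
  rw [Finset.sum_congr rfl (fun q _ => hfil q), Finset.sum_ite_eq' Finset.univ q₀] at hsum
  simp only [Finset.mem_univ, if_true] at hsum
  have hz : (g q₀ : A n) * bas G q₀ = 0 := AddMonoidAlgebra.coeff_injective hsum
  have hunit : (g q₀ : A n) = 0 := by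
    have h2 : ((g q₀ : A n) * bas G q₀) * sg (-(q₀.out)) 1 = 0 := by
      rw [hz, zero_mul]
    rw [mul_assoc, show (bas G q₀) * sg (-(q₀.out)) 1 = 1 by
      rw [bas]; rw [sg_mul_sg, add_neg_cancel, mul_one, sg_zero_one]] at h2
    rwa [mul_one] at h2
  exact Subtype.ext hunit

end LaurentAux

open LaurentAux in
/-- For a finite subgroup `G ⊆ (ℂ*)ⁿ` acting on the Laurent ring `A` by
homotheties of the variables, `A` is a free module over the fixed subalgebra
`A^G` of rank `|G|`. -/
theorem laurent_free_over_fixed_of_rank_card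
    (n : ℕ) (G : Subgroup (Fin n → ℂˣ)) [Finite G] :
    Nonempty (Module.Basis (Fin (Nat.card G)) ↥(fixedSubalg n G) (A n)) := by
  have hfin : Finite (Q G) := finite_Q G
  have hcard : Nat.card (Q G) = Nat.card G := card_Q G
  exact ⟨(Module.Basis.mk (linIndep_bas G) (span_bas G)).reindex (Finite.equivFinOfCardEq hcard)⟩
end
end

section
/- Let G be a finite subgroup of (C*)ⁿ acting on A by homotheties, and P a G-invariant submodule of A^k with dim_C(A^k/P) finite. Then the dimension of the space of G-invariant solutions Ker_F(P)^G equals (1/|G|)·dim_C(A^k/P). -/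
noncomputable section

lemma smul_comm' {n : ℕ} (a : A n) (c : ℂ) (f : F n) : a • (c • f) = c • (a • f) := by
  funext x
  rw [Pi.smul_apply, smul_eq_mul, smul_def', smul_def', Finsupp.mul_sum]
  refine Finsupp.sum_congr ?_
  intro y _
  rw [Pi.smul_apply, smul_eq_mul]
  ring

lemma fext_add {n : ℕ} (f g : F n) (a : A n) :
    fext (f + g) a = fext f a + fext g a := by
  simp [fext, mul_add, Finsupp.sum_add]

lemma fext_smul {n : ℕ} (c : ℂ) (f : F n) (a : A n) :
    fext (c • f) a = c * fext f a := by
  rw [fext, fext, Finsupp.mul_sum]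
  refine Finsupp.sum_congr ?_
  intro y _
  rw [Pi.smul_apply, smul_eq_mul]
  ring

/-- The space of `G`-symmetric solutions to the system `P`: solutions `f` of `P`
each of whose components is invariant under the dual action of `G`. -/
def solG (n k : ℕ) (G : Subgroup (Fin n → ℂˣ)) (P : Submodule (A n) (Fin k → A n)) :
    Submodule ℂ (Fin k → F n) where
  carrier := {f | (∀ p ∈ P, (∑ j, p j • f j) = 0) ∧
    ∀ ζ ∈ G, ∀ (j : Fin k) (a : A n), fext (f j) (actU ζ a) = fext (f j) a}
  add_mem' := by
    intro f g hf hg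
    constructor
    · intro p hp
      have h1 := hf.1 p hp
      have h2 := hg.1 p hp
      simp only [Pi.add_apply, smul_add, Finset.sum_add_distrib, h1, h2, add_zero]
    · intro ζ hζ j a
      simp only [Pi.add_apply, fext_add, hf.2 ζ hζ j a, hg.2 ζ hζ j a]
  zero_mem' := by
    refine ⟨by intro p _; simp, ?_⟩
    intro ζ hζ j a
    simp [fext]
  smul_mem' := by
    intro c f hf
    constructor
    · intro p hp
      have h1 := hf.1 p hp
      simp only [Pi.smul_apply, smul_comm', ← Finset.smul_sum, h1, smul_zero]
    · intro ζ hζ j a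
      simp only [Pi.smul_apply, fext_smul, hf.2 ζ hζ j a]

namespace SymAux

variable {n k : ℕ}

lemma actU_single (ζ : Fin n → ℂˣ) (y : Fin n → ℤ) (c : ℂ) :
    actU ζ (AddMonoidAlgebra.single y c)
      = AddMonoidAlgebra.single y (c * ((∏ i, ζ i ^ (y i) : ℂˣ) : ℂ)) := by
  rw [actU, AddMonoidAlgebra.lift_single]
  simp [homHom, AddMonoidAlgebra.smul_single']

lemma actU_one : actU (1 : Fin n → ℂˣ) = AlgHom.id ℂ (A n) := by
  apply AddMonoidAlgebra.algHom_ext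
  intro y
  simp [actU_single]
  exact Subsingleton.elim _ _

lemma actU_comp (ζ ζ' : Fin n → ℂˣ) :
    (actU ζ).comp (actU ζ') = actU (ζ * ζ') := by
  apply AddMonoidAlgebra.algHom_ext
  intro y
  simp only [AlgHom.comp_apply, actU_single, one_mul]
  congr 1
  push_cast
  rw [← Finset.prod_mul_distrib]
  simp [mul_zpow]
  exact Finset.prod_congr rfl fun i _ => mul_comm _ _
  exact Subsingleton.elim _ _


lemma fext_zero_right (f : F n) : fext f (0 : A n) = 0 := by
  simp [fext]

lemma fext_add_right (f : F n) (a b : A n) : fext f (a + b) = fext f a + fext f b := by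
  classical
  exact Finsupp.sum_add_index (by simp) (by intro y _ c d; ring)

lemma fext_smul_right (c : ℂ) (f : F n) (a : A n) : fext f (c • a) = c * fext f a := by
  classical
  rw [fext, AddMonoidAlgebra.coeff_smul, Finsupp.sum_smul_index (by simp), fext, Finsupp.mul_sum]
  exact Finsupp.sum_congr fun y _ => by ring

lemma fext_single (f : F n) (y : Fin n → ℤ) (c : ℂ) :
    fext f (AddMonoidAlgebra.single y c) = c * f y := by
  classical
  rw [fext, AddMonoidAlgebra.coeff_single, Finsupp.sum_single_index (by simp)]

/-- `f ↦ (p ↦ ∑ j, fext (f j) (p j))` as a linear equivalence onto the dual of `A^k`. -/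
def Edual (n k : ℕ) : (Fin k → F n) ≃ₗ[ℂ] Module.Dual ℂ (Fin k → A n) where
  toFun f :=
    { toFun := fun p => ∑ j, fext (f j) (p j)
      map_add' := fun p q => by simp [fext_add_right, Finset.sum_add_distrib]
      map_smul' := fun c p => by simp [fext_smul_right, Finset.mul_sum] }
  map_add' f g := by
    refine LinearMap.ext fun p => ?_
    simp [fext_add, Finset.sum_add_distrib]
  map_smul' c f := by
    refine LinearMap.ext fun p => ?_
    simp [fext_smul, Finset.mul_sum]
  invFun ψ := fun j x => ψ (Pi.single j (AddMonoidAlgebra.single x 1))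
  left_inv f := by
    classical
    funext j x
    simp only [LinearMap.coe_mk, AddHom.coe_mk]
    rw [Finset.sum_eq_single j]
    · rw [Pi.single_eq_same, fext_single, one_mul]
    · intro b _ hb
      rw [Pi.single_eq_of_ne hb, fext_zero_right]
    · intro h; exact absurd (Finset.mem_univ j) h
  right_inv ψ := by
    classical
    refine LinearMap.ext fun p => ?_
    simp only [LinearMap.coe_mk, AddHom.coe_mk]
    have key : ∀ (j : Fin k) (a : A n),
        fext (fun x => ψ (Pi.single j (AddMonoidAlgebra.single x 1))) a
          = ψ (Pi.single j a) := by
      intro j a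
      have ha : Pi.single (M := fun _ : Fin k => A n) j a
          = a.coeff.sum fun y c =>
            Pi.single (M := fun _ : Fin k => A n) j (AddMonoidAlgebra.single y c) := by
        conv_lhs => rw [← AddMonoidAlgebra.sum_coeff_single a]
        rw [Finsupp.sum]
        exact map_sum (LinearMap.single ℂ (fun _ : Fin k => A n) j) _ _
      rw [ha, map_finsuppSum, fext]
      refine Finsupp.sum_congr fun y _ => ?_
      rw [show (AddMonoidAlgebra.single y (a.coeff y) : A n)
            = (a.coeff y) • AddMonoidAlgebra.single y (1 : ℂ) by
          rw [AddMonoidAlgebra.smul_single', mul_one],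
        Pi.single_smul, map_smul, smul_eq_mul]
    calc ∑ j, fext (fun x => ψ (Pi.single j (AddMonoidAlgebra.single x 1))) (p j)
        = ∑ j, ψ (Pi.single j (p j)) := by
          exact Finset.sum_congr rfl fun j _ => key j (p j)
      _ = ψ (∑ j, Pi.single j (p j)) := (map_sum ψ _ _).symm
      _ = ψ p := by rw [Finset.univ_sum_single]


lemma fext_mul_single (f : F n) (a : A n) (x : Fin n → ℤ) :
    fext f (AddMonoidAlgebra.single x (1:ℂ) * a) = (a • f) x := by
  have h1 : fext f (AddMonoidAlgebra.single x (1:ℂ) * a)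
      = ((AddMonoidAlgebra.single x (1:ℂ) * a) • f) 0 := by
    rw [smul_def', fext]
    exact Finsupp.sum_congr fun y _ => by rw [zero_add]
  rw [h1, mul_smul, smul_def', AddMonoidAlgebra.coeff_single, Finsupp.sum_single_index (by simp)]
  rw [zero_add, one_mul]

lemma fext_eq_smul_zero (f : F n) (a : A n) : fext f a = (a • f) 0 := by
  rw [smul_def', fext]
  exact Finsupp.sum_congr fun y _ => by rw [zero_add]

lemma sum_apply_pisingle (ψ : Module.Dual ℂ (Fin k → A n)) (v : Fin k → A n) :
    ∑ j, ψ (Pi.single j (v j)) = ψ v := by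
  rw [← map_sum ψ, Finset.univ_sum_single]

lemma Edual_symm_fext (ψ : Module.Dual ℂ (Fin k → A n)) (j : Fin k) (a : A n) :
    fext ((Edual n k).symm ψ j) a = ψ (Pi.single j a) := by
  classical
  have ha : Pi.single (M := fun _ : Fin k => A n) j a
      = a.coeff.sum fun y c =>
        Pi.single (M := fun _ : Fin k => A n) j (AddMonoidAlgebra.single y c) := by
    conv_lhs => rw [← AddMonoidAlgebra.sum_coeff_single a]
    rw [Finsupp.sum]
    exact map_sum (LinearMap.single ℂ (fun _ : Fin k => A n) j) _ _
  rw [ha, map_finsuppSum, fext]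
  refine Finsupp.sum_congr fun y _ => ?_
  rw [show (AddMonoidAlgebra.single y (a.coeff y) : A n)
        = (a.coeff y) • AddMonoidAlgebra.single y (1 : ℂ) by
      rw [AddMonoidAlgebra.smul_single', mul_one],
    Pi.single_smul, map_smul, smul_eq_mul]
  rfl

section Quot

variable (n k : ℕ) (G : Subgroup (Fin n → ℂˣ)) (P : Submodule (A n) (Fin k → A n))

/-- Componentwise action of the homothety on `A^k`, as a `ℂ`-linear map. -/
def LL (ζ : Fin n → ℂˣ) : (Fin k → A n) →ₗ[ℂ] (Fin k → A n) :=
  LinearMap.pi fun j => (actU ζ).toLinearMap ∘ₗ LinearMap.proj j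

lemma LL_apply (ζ : Fin n → ℂˣ) (p : Fin k → A n) :
    LL n k ζ p = fun j => actU ζ (p j) := rfl

variable (hinv : ∀ ζ ∈ G, ∀ p ∈ P, (fun j => actU ζ (p j)) ∈ P)

/-- The induced action of `G` on the quotient. -/
def rho (g : G) :
    ((Fin k → A n) ⧸ P.restrictScalars ℂ) →ₗ[ℂ] ((Fin k → A n) ⧸ P.restrictScalars ℂ) :=
  Submodule.mapQ _ _ (LL n k g.1) (by
    intro p hp
    simpa [Submodule.mem_comap, LL_apply] using hinv g.1 g.2 p hp)

lemma rho_mk (g : G) (p : Fin k → A n) :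
    rho n k G P hinv g (Submodule.Quotient.mk p)
      = Submodule.Quotient.mk (fun j => actU g.1 (p j)) :=
  Submodule.mapQ_apply _ _ _ p

lemma rho_one : rho n k G P hinv 1 = LinearMap.id := by
  refine Submodule.linearMap_qext _ ?_
  refine LinearMap.ext fun p => ?_
  simp only [LinearMap.comp_apply, Submodule.mkQ_apply, rho_mk, LinearMap.id_comp]
  congr 1
  funext j
  simp [actU_one]

lemma rho_mul (g h : G) :
    rho n k G P hinv g ∘ₗ rho n k G P hinv h = rho n k G P hinv (g * h) := by
  refine Submodule.linearMap_qext _ ?_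
  refine LinearMap.ext fun p => ?_
  simp only [LinearMap.comp_apply, Submodule.mkQ_apply, rho_mk]
  congr 1
  funext j
  have := congrArg (fun φ => φ (p j)) (actU_comp g.1 h.1)
  simpa using this

/-- Multiplication by an element of `A` on `A^k`, as a `ℂ`-linear endomorphism. -/
def mulA (a : A n) : (Fin k → A n) →ₗ[ℂ] (Fin k → A n) where
  toFun p := a • p
  map_add' p q := smul_add a p q
  map_smul' c p := smul_comm a c p

/-- Multiplication descends to the quotient. -/
def mulQ (a : A n) :
    ((Fin k → A n) ⧸ P.restrictScalars ℂ) →ₗ[ℂ] ((Fin k → A n) ⧸ P.restrictScalars ℂ) :=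
  Submodule.mapQ _ _ (mulA n k a) (by
    intro p hp
    simpa [Submodule.mem_comap, mulA] using P.smul_mem a hp)

lemma mulQ_mk (a : A n) (p : Fin k → A n) :
    mulQ n k P a (Submodule.Quotient.mk p) = Submodule.Quotient.mk (a • p) :=
  Submodule.mapQ_apply _ _ _ p

lemma mulQ_mul (a b : A n) :
    mulQ n k P a ∘ₗ mulQ n k P b = mulQ n k P (a * b) := by
  refine Submodule.linearMap_qext _ ?_
  refine LinearMap.ext fun p => ?_
  simp [LinearMap.comp_apply, Submodule.mkQ_apply, mulQ_mk, mul_smul]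

lemma mulQ_one : mulQ n k P 1 = LinearMap.id := by
  refine Submodule.linearMap_qext _ ?_
  refine LinearMap.ext fun p => ?_
  simp [LinearMap.comp_apply, Submodule.mkQ_apply, mulQ_mk]

/-- The fundamental commutation relation on the quotient. -/
lemma rho_mulQ (g : G) (i : Fin n) :
    rho n k G P hinv g ∘ₗ mulQ n k P (AddMonoidAlgebra.single (Pi.single i 1) (1:ℂ))
      = ((g.1 i : ℂ)) • (mulQ n k P (AddMonoidAlgebra.single (Pi.single i 1) (1:ℂ))
          ∘ₗ rho n k G P hinv g) := by
  refine Submodule.linearMap_qext _ ?_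
  refine LinearMap.ext fun p => ?_
  simp only [LinearMap.comp_apply, Submodule.mkQ_apply, rho_mk, mulQ_mk,
    LinearMap.smul_apply, LinearMap.smul_comp, LinearMap.comp_apply]
  rw [← Submodule.Quotient.mk_smul]
  congr 1
  funext j
  simp only [Pi.smul_apply, smul_eq_mul]
  show actU g.1 (AddMonoidAlgebra.single (Pi.single i 1) (1:ℂ) * p j)
    = (g.1 i : ℂ) • (AddMonoidAlgebra.single (Pi.single i 1) (1:ℂ) * actU g.1 (p j))
  rw [map_mul, actU_single]
  have : ((∏ i', g.1 i' ^ (Pi.single i 1 : Fin n → ℤ) i' : ℂˣ) : ℂ) = (g.1 i : ℂ) := by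
    rw [Finset.prod_eq_single i (by
        intro b _ hb
        rw [Pi.single_eq_of_ne hb, zpow_zero]) (by simp)]
    simp
  rw [one_mul, this, ← smul_mul_assoc, AddMonoidAlgebra.smul_single', mul_one]

/-- Vanishing of the trace of a nontrivial homothety on the quotient. -/
lemma trace_rho_eq_zero [FiniteDimensional ℂ ((Fin k → A n) ⧸ P.restrictScalars ℂ)]
    (g : G) (hg : g ≠ 1) :
    LinearMap.trace ℂ _ (rho n k G P hinv g) = 0 := by
  obtain ⟨i, hi⟩ : ∃ i, g.1 i ≠ 1 := by
    by_contra h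
    push_neg at h
    exact hg (Subtype.ext (funext h))
  set u : A n := AddMonoidAlgebra.single (Pi.single i 1) (1:ℂ) with hu
  set u' : A n := AddMonoidAlgebra.single (-(Pi.single i (1:ℤ))) (1:ℂ) with hu'
  have huu : u' * u = 1 := by
    rw [hu, hu', AddMonoidAlgebra.single_mul_single, neg_add_cancel, one_mul,
      ← AddMonoidAlgebra.one_def]
  have huu2 : u * u' = 1 := by
    rw [hu, hu', AddMonoidAlgebra.single_mul_single, add_neg_cancel, one_mul,
      ← AddMonoidAlgebra.one_def]
  set ρ := rho n k G P hinv g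
  set Su := mulQ n k P u
  set Su' := mulQ n k P u'
  have h1 : Su' * Su = 1 := by
    show Su' ∘ₗ Su = LinearMap.id
    rw [mulQ_mul, huu, mulQ_one]
  have h2 : Su * Su' = 1 := by
    show Su ∘ₗ Su' = LinearMap.id
    rw [mulQ_mul, huu2, mulQ_one]
  have comm : ρ * Su = (g.1 i : ℂ) • (Su * ρ) := rho_mulQ n k G P hinv g i
  have key : LinearMap.trace ℂ _ ρ = (g.1 i : ℂ) * LinearMap.trace ℂ _ ρ := by
    calc LinearMap.trace ℂ _ ρ
        = LinearMap.trace ℂ _ (ρ * (Su * Su')) := by rw [h2, mul_one]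
      _ = LinearMap.trace ℂ _ ((ρ * Su) * Su') := by rw [mul_assoc]
      _ = LinearMap.trace ℂ _ (((g.1 i : ℂ) • (Su * ρ)) * Su') := by rw [comm]
      _ = (g.1 i : ℂ) * LinearMap.trace ℂ _ ((Su * ρ) * Su') := by
          rw [smul_mul_assoc, map_smul, smul_eq_mul]
      _ = (g.1 i : ℂ) * LinearMap.trace ℂ _ (Su' * (Su * ρ)) := by
          rw [LinearMap.trace_mul_comm]
      _ = (g.1 i : ℂ) * LinearMap.trace ℂ _ ρ := by
          rw [← mul_assoc, h1, one_mul]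
  have hne : (g.1 i : ℂ) ≠ 1 := fun h => hi (Units.val_eq_one.mp h)
  have h0 : ((g.1 i : ℂ) - 1) * LinearMap.trace ℂ _ ρ = 0 := by
    rw [sub_mul, one_mul, ← key, sub_self]
  rcases mul_eq_zero.mp h0 with h | h
  · exact absurd (by linear_combination h : (g.1 i : ℂ) = 1) hne
  · exact h

/-- The `G`-fixed functionals on the quotient. -/
def fixedDual : Submodule ℂ (Module.Dual ℂ ((Fin k → A n) ⧸ P.restrictScalars ℂ)) where
  carrier := {φ | ∀ g : G, φ ∘ₗ rho n k G P hinv g = φ}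
  add_mem' := by
    intro φ ψ hφ hψ g
    rw [LinearMap.add_comp, hφ g, hψ g]
  zero_mem' := by
    intro g
    rw [LinearMap.zero_comp]
  smul_mem' := by
    intro c φ hφ g
    rw [LinearMap.smul_comp, hφ g]

lemma card_mul_finrank [Finite G]
    [FiniteDimensional ℂ ((Fin k → A n) ⧸ P.restrictScalars ℂ)] :
    Nat.card G * Module.finrank ℂ (fixedDual n k G P hinv)
      = Module.finrank ℂ ((Fin k → A n) ⧸ P.restrictScalars ℂ) := by
  classical
  have : Fintype G := Fintype.ofFinite G
  set Mq := (Fin k → A n) ⧸ P.restrictScalars ℂ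
  set N := Nat.card G with hN
  have hNpos : 0 < N := Nat.card_pos
  have hNC : (N : ℂ) ≠ 0 := Nat.cast_ne_zero.mpr hNpos.ne'
  set π : Mq →ₗ[ℂ] Mq := (N : ℂ)⁻¹ • ∑ g : G, rho n k G P hinv g with hπ
  have hcard : Fintype.card G = N := by
    rw [hN, Nat.card_eq_fintype_card]
  have hπg : ∀ g0 : G, π * rho n k G P hinv g0 = π := by
    intro g0
    rw [hπ, smul_mul_assoc, Finset.sum_mul]
    congr 1
    rw [← Equiv.sum_comp (Equiv.mulRight g0) (fun g => rho n k G P hinv g)]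
    refine Finset.sum_congr rfl fun g _ => ?_
    show rho n k G P hinv g * rho n k G P hinv g0 = rho n k G P hinv (g * g0)
    exact rho_mul n k G P hinv g g0
  have hππ : π * π = π := by
    conv_lhs => rw [hπ, mul_smul_comm]
    rw [Finset.mul_sum]
    have : ∀ g : G, π * rho n k G P hinv g = π := hπg
    rw [Finset.sum_congr rfl fun g _ => this g, Finset.sum_const, Finset.card_univ,
      hcard, ← Nat.cast_smul_eq_nsmul ℂ, smul_smul, inv_mul_cancel₀ hNC, one_smul]
  have hproj : LinearMap.IsProj (LinearMap.range π) π := by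
    refine ⟨fun x => LinearMap.mem_range_self π x, ?_⟩
    rintro x ⟨y, rfl⟩
    exact congrFun (congrArg DFunLike.coe hππ) y
  have htr1 : LinearMap.trace ℂ Mq π = (Module.finrank ℂ (LinearMap.range π) : ℂ) :=
    hproj.trace
  have htr2 : LinearMap.trace ℂ Mq π = (N : ℂ)⁻¹ * (Module.finrank ℂ Mq : ℂ) := by
    rw [hπ, map_smul, map_sum, smul_eq_mul]
    congr 1
    rw [Finset.sum_eq_single 1]
    · rw [rho_one]
      exact LinearMap.trace_id ℂ Mq
    · intro g _ hg
      exact trace_rho_eq_zero n k G P hinv g hg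
    · intro h
      exact absurd (Finset.mem_univ 1) h
  -- identify the fixed dual with the range of the dual of π
  have hrange : LinearMap.range π.dualMap = fixedDual n k G P hinv := by
    apply le_antisymm
    · rintro _ ⟨φ, rfl⟩
      intro g
      rw [LinearMap.dualMap_apply', LinearMap.comp_assoc]
      congr 1
      exact hπg g
    · intro φ hφ
      refine ⟨φ, ?_⟩
      rw [LinearMap.dualMap_apply']
      refine LinearMap.ext fun x => ?_
      rw [LinearMap.comp_apply, hπ, LinearMap.smul_apply, LinearMap.sum_apply,
        map_smul, map_sum, smul_eq_mul]
      have : ∀ g : G, φ (rho n k G P hinv g x) = φ x := fun g =>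
        congrFun (congrArg DFunLike.coe (hφ g)) x
      rw [Finset.sum_congr rfl fun g _ => this g, Finset.sum_const, Finset.card_univ,
        hcard, nsmul_eq_mul, ← mul_assoc, inv_mul_cancel₀ hNC, one_mul]
  have hfr : Module.finrank ℂ (fixedDual n k G P hinv)
      = Module.finrank ℂ (LinearMap.range π) := by
    rw [← hrange, LinearMap.finrank_range_dualMap_eq_finrank_range]
  have : (N : ℂ) * (Module.finrank ℂ (fixedDual n k G P hinv) : ℂ)
      = (Module.finrank ℂ Mq : ℂ) := by
    rw [hfr, ← htr1, htr2, ← mul_assoc, mul_inv_cancel₀ hNC, one_mul]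
  exact_mod_cast this

lemma Edual_apply (f : Fin k → F n) (p : Fin k → A n) :
    Edual n k f p = ∑ j, fext (f j) (p j) := rfl

lemma Edual_vanish {f : Fin k → F n} (hf : f ∈ solG n k G P) :
    P.restrictScalars ℂ ≤ LinearMap.ker (Edual n k f) := by
  intro p hp
  rw [LinearMap.mem_ker, Edual_apply]
  have h0 : (∑ j, p j • f j) = 0 := hf.1 p hp
  calc ∑ j, fext (f j) (p j) = ∑ j, (p j • f j) 0 := by
        exact Finset.sum_congr rfl fun j _ => fext_eq_smul_zero (f j) (p j)
    _ = (∑ j, p j • f j) 0 := by rw [Finset.sum_apply]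
    _ = 0 := by rw [h0]; rfl

/-- The correspondence between symmetric solutions and `G`-fixed functionals
on the quotient. -/
def solEquiv : ↥(solG n k G P) ≃ₗ[ℂ] ↥(fixedDual n k G P hinv) where
  toFun f := ⟨Submodule.liftQ _ (Edual n k f.1) (Edual_vanish n k G P f.2), by
    intro g
    refine Submodule.linearMap_qext _ (LinearMap.ext fun p => ?_)
    simp only [LinearMap.comp_apply, Submodule.mkQ_apply, rho_mk,
      Submodule.liftQ_apply, Edual_apply]
    exact Finset.sum_congr rfl fun j _ => f.2.2 g.1 g.2 j (p j)⟩
  map_add' f g := by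
    refine Subtype.ext (Submodule.linearMap_qext _ (LinearMap.ext fun p => ?_))
    simp only [LinearMap.comp_apply, Submodule.mkQ_apply, Submodule.liftQ_apply]
    show Edual n k (↑(f + g)) p = Edual n k f.1 p + Edual n k g.1 p
    rw [show ((↑(f + g) : Fin k → F n)) = f.1 + g.1 from rfl, map_add]
    rfl
  map_smul' c f := by
    refine Subtype.ext (Submodule.linearMap_qext _ (LinearMap.ext fun p => ?_))
    simp only [LinearMap.comp_apply, Submodule.mkQ_apply, Submodule.liftQ_apply]
    show Edual n k (↑(c • f)) p = c • Edual n k f.1 p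
    rw [show ((↑(c • f) : Fin k → F n)) = c • f.1 from rfl, map_smul]
    rfl
  invFun φ := ⟨(Edual n k).symm (φ.1 ∘ₗ (P.restrictScalars ℂ).mkQ), by
    set ψ : Module.Dual ℂ (Fin k → A n) := φ.1 ∘ₗ (P.restrictScalars ℂ).mkQ with hψ
    have hψ0 : ∀ p ∈ P, ψ p = 0 := by
      intro p hp
      have hmk : ((Submodule.Quotient.mk p : (Fin k → A n) ⧸ P.restrictScalars ℂ)) = 0 :=
        (Submodule.Quotient.mk_eq_zero _).mpr hp
      rw [hψ, LinearMap.comp_apply, Submodule.mkQ_apply, hmk, map_zero]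
    constructor
    · intro p hp
      funext x
      have hx : AddMonoidAlgebra.single x (1:ℂ) • p ∈ P :=
        P.smul_mem _ hp
      calc (∑ j, p j • (Edual n k).symm ψ j) x
          = ∑ j, fext ((Edual n k).symm ψ j) (AddMonoidAlgebra.single x (1:ℂ) * p j) := by
            rw [Finset.sum_apply]
            exact Finset.sum_congr rfl fun j _ => (fext_mul_single _ _ _).symm
        _ = ∑ j, ψ (Pi.single j (AddMonoidAlgebra.single x (1:ℂ) * p j)) :=
            Finset.sum_congr rfl fun j _ => Edual_symm_fext ψ j _
        _ = ψ (fun j => AddMonoidAlgebra.single x (1:ℂ) * p j) :=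
            sum_apply_pisingle ψ _
        _ = ψ (AddMonoidAlgebra.single x (1:ℂ) • p) := by congr 1
        _ = 0 := hψ0 _ hx
    · intro ζ hζ j a
      rw [Edual_symm_fext, Edual_symm_fext]
      have h1 : Pi.single (M := fun _ : Fin k => A n) j (actU ζ a)
          = fun j' => actU ζ (Pi.single (M := fun _ : Fin k => A n) j a j') := by
        funext j'
        by_cases h : j' = j
        · subst h; rw [Pi.single_eq_same, Pi.single_eq_same]
        · rw [Pi.single_eq_of_ne h, Pi.single_eq_of_ne h, map_zero]
      rw [h1, hψ]
      simp only [LinearMap.comp_apply, Submodule.mkQ_apply]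
      rw [← rho_mk n k G P hinv ⟨ζ, hζ⟩]
      exact congrFun (congrArg DFunLike.coe (φ.2 ⟨ζ, hζ⟩)) _⟩
  left_inv f := by
    refine Subtype.ext ?_
    show (Edual n k).symm ((Submodule.liftQ _ (Edual n k f.1)
      (Edual_vanish n k G P f.2)) ∘ₗ (P.restrictScalars ℂ).mkQ) = f.1
    rw [Submodule.liftQ_mkQ, LinearEquiv.symm_apply_apply]
  right_inv φ := by
    refine Subtype.ext ?_
    show Submodule.liftQ _ (Edual n k ((Edual n k).symm (φ.1 ∘ₗ (P.restrictScalars ℂ).mkQ))) _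
      = φ.1
    refine Submodule.linearMap_qext _ ?_
    rw [Submodule.liftQ_mkQ, LinearEquiv.apply_symm_apply]

end Quot

end SymAux

/-- For a finite subgroup `G ⊆ (ℂ*)ⁿ` acting on `A` by homotheties and a
`G`-invariant submodule `P ⊆ A^k` with `dim_ℂ(A^k/P)` finite, the space of
`G`-invariant solutions has dimension `(1/|G|)·dim_ℂ(A^k/P)`. -/
theorem symmetric_solution_dimension (n k : ℕ)
    (G : Subgroup (Fin n → ℂˣ)) [Finite G]
    (P : Submodule (A n) (Fin k → A n))
    (hinv : ∀ ζ ∈ G, ∀ p ∈ P, (fun j => actU ζ (p j)) ∈ P)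
    (hfd : FiniteDimensional ℂ ((Fin k → A n) ⧸ P)) :
    Nat.card G * Module.finrank ℂ ↥(solG n k G P)
      = Module.finrank ℂ ((Fin k → A n) ⧸ P) := by
  classical
  have hfd' : FiniteDimensional ℂ ((Fin k → A n) ⧸ P.restrictScalars ℂ) :=
    Module.Finite.equiv (Submodule.Quotient.restrictScalarsEquiv ℂ P).symm
  have h1 : Module.finrank ℂ ↥(solG n k G P)
      = Module.finrank ℂ ↥(SymAux.fixedDual n k G P hinv) :=
    (SymAux.solEquiv n k G P hinv).finrank_eq
  have h2 := SymAux.card_mul_finrank n k G P hinv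
  have h3 : Module.finrank ℂ ((Fin k → A n) ⧸ P.restrictScalars ℂ)
      = Module.finrank ℂ ((Fin k → A n) ⧸ P) :=
    (Submodule.Quotient.restrictScalarsEquiv ℂ P).finrank_eq
  rw [h1, ← h3]
  exact h2
end
end

section
/- Let G be a finite subgroup of GLₙ(Z) acting on Zⁿ and hence on A = C[σ₁,σ₁⁻¹,...,σₙ,σₙ⁻¹] by permuting monomials, and let P ⊆ A^k be a G-invariant submodule. Then every solution f ∈ Ker_F(P) is G-invariant if and only if for every k-tuple of monomials (σ^{x¹},...,σ^{x^k}) and every g ∈ G, the element (σ^{x¹} − g·σ^{x¹}, ..., σ^{x^k} − g·σ^{x^k}) belongs to P. -/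
noncomputable section

/-- The monoid hom sending `σ^y` to `σ^{My}` for a matrix `M ∈ GLₙ(ℤ)`. -/
def glHom {n : ℕ} (M : Matrix (Fin n) (Fin n) ℤ) : Multiplicative (Fin n → ℤ) →* A n where
  toFun y := AddMonoidAlgebra.single (M.mulVec y.toAdd) 1
  map_one' := by simp [AddMonoidAlgebra.one_def]
  map_mul' y w := by
    simp [AddMonoidAlgebra.single_mul_single, Matrix.mulVec_add]

/-- The algebra endomorphism of the Laurent ring induced by `g ∈ GLₙ(ℤ)`,
acting on monomials by `g · σ^x = σ^{gx}`. -/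
def actGL {n : ℕ} (g : Matrix.GeneralLinearGroup (Fin n) ℤ) : A n →ₐ[ℂ] A n :=
  AddMonoidAlgebra.lift ℂ (A n) (Fin n → ℤ) (glHom (g : Matrix (Fin n) (Fin n) ℤ))

lemma actGL_single {n : ℕ} (g : Matrix.GeneralLinearGroup (Fin n) ℤ)
    (y : Fin n → ℤ) (c : ℂ) :
    actGL g (AddMonoidAlgebra.single y c)
      = AddMonoidAlgebra.single ((g : Matrix (Fin n) (Fin n) ℤ).mulVec y) c := by
  unfold actGL
  rw [AddMonoidAlgebra.lift_single]
  simp [glHom, Finsupp.smul_single]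

lemma fext_eq_lc {n : ℕ} (f : F n) (a : A n) :
    fext f a = Finsupp.linearCombination ℂ f a.coeff := by
  rw [fext, Finsupp.linearCombination_apply]
  rfl

lemma fext_single {n : ℕ} (f : F n) (y : Fin n → ℤ) (c : ℂ) :
    fext f (AddMonoidAlgebra.single y c) = c * f y := by
  rw [fext_eq_lc]
  simp [AddMonoidAlgebra.coeff_single, Finsupp.linearCombination_single]

lemma single_smul_apply {n : ℕ} (y : Fin n → ℤ) (c : ℂ) (f : F n) (x : Fin n → ℤ) :
    ((AddMonoidAlgebra.single y c : A n) • f) x = c * f (x + y) := by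
  rw [smul_def', AddMonoidAlgebra.coeff_single, Finsupp.sum_single_index]
  simp

/-- For a finite subgroup `G ⊆ GLₙ(ℤ)` acting on `A` by permuting monomials and a
`G`-invariant submodule `P ⊆ A^k`: every solution of `P` is `G`-invariant if and
only if `(σ^{x¹} − g·σ^{x¹}, …, σ^{x^k} − g·σ^{x^k}) ∈ P` for every tuple of
monomials and every `g ∈ G`. -/
theorem all_solutions_symmetric_iff (n k : ℕ)
    (G : Subgroup (Matrix.GeneralLinearGroup (Fin n) ℤ)) [Finite G]
    (P : Submodule (A n) (Fin k → A n))
    (hinv : ∀ g ∈ G, ∀ p ∈ P, (fun j => actGL g (p j)) ∈ P) :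
    (∀ f : Fin k → F n, (∀ p ∈ P, (∑ j, p j • f j) = 0) →
        ∀ g ∈ G, ∀ (j : Fin k) (a : A n), fext (f j) (actGL g a) = fext (f j) a) ↔
      (∀ (x : Fin k → (Fin n → ℤ)), ∀ g ∈ G,
        (fun j => AddMonoidAlgebra.single (x j) (1 : ℂ)
          - actGL g (AddMonoidAlgebra.single (x j) 1)) ∈ P) := by
  constructor
  · intro hsol x g hg
    set q : Fin k → A n := fun j => AddMonoidAlgebra.single (x j) (1 : ℂ)
        - actGL g (AddMonoidAlgebra.single (x j) 1) with hq
    suffices h : Submodule.Quotient.mk (p := P.restrictScalars ℂ) q = 0 by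
      exact (Submodule.Quotient.mk_eq_zero _).mp h
    rw [← Module.forall_dual_apply_eq_zero_iff ℂ]
    intro φ
    set ψ : (Fin k → A n) →ₗ[ℂ] ℂ := φ.comp (P.restrictScalars ℂ).mkQ with hψ
    have hψP : ∀ p ∈ P, ψ p = 0 := by
      intro p hp
      have h0 : (P.restrictScalars ℂ).mkQ p = 0 := by
        rw [Submodule.mkQ_apply, Submodule.Quotient.mk_eq_zero]
        exact hp
      simp [hψ, h0]
    set f : Fin k → F n := fun j y => ψ (Pi.single j (AddMonoidAlgebra.single y 1)) with hf
    have fsingle : ∀ (j : Fin k) (z : Fin n → ℤ) (c : ℂ),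
        ψ (Pi.single j (AddMonoidAlgebra.single z c)) = c * f j z := by
      intro j z c
      have h1 : (AddMonoidAlgebra.single z c : A n)
          = c • AddMonoidAlgebra.single z (1:ℂ) := by
        rw [AddMonoidAlgebra.smul_single', mul_one]
      rw [h1]
      have h2 : (Pi.single j ((c • AddMonoidAlgebra.single z (1:ℂ) : A n)) : Fin k → A n)
          = c • (Pi.single j (AddMonoidAlgebra.single z (1:ℂ)) : Fin k → A n) :=
        Pi.single_smul j c _
      rw [h2, map_smul, smul_eq_mul]
    have key : ∀ (j : Fin k) (z : Fin n → ℤ) (a : A n),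
        (a • f j) z = ψ (Pi.single j (AddMonoidAlgebra.single z (1:ℂ) * a)) := by
      intro j z a
      induction a using AddMonoidAlgebra.induction_linear with
      | zero =>
        rw [zero_smul, mul_zero, Pi.single_zero, map_zero]
        rfl
      | add a b ha hb =>
        rw [add_smul, Pi.add_apply, ha, hb, ← map_add]
        congr 1
        rw [← Pi.single_add, mul_add]
      | single y c =>
        rw [single_smul_apply, AddMonoidAlgebra.single_mul_single, one_mul, fsingle]
    have hsolf : ∀ p ∈ P, (∑ j, p j • f j) = 0 := by
      intro p hp
      funext z
      rw [Finset.sum_apply]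
      have h1 : ∀ j ∈ Finset.univ, (p j • f j) z
          = ψ (Pi.single j (AddMonoidAlgebra.single z (1:ℂ) * p j)) :=
        fun j _ => key j z (p j)
      rw [Finset.sum_congr rfl h1, ← map_sum]
      have hsum : (∑ j, (Pi.single j (AddMonoidAlgebra.single z (1:ℂ) * p j) : Fin k → A n))
          = (AddMonoidAlgebra.single z (1:ℂ)) • p := by
        rw [← Finset.univ_sum_single ((AddMonoidAlgebra.single z (1:ℂ)) • p)]
        rfl
      rw [hsum]
      have hmem : (AddMonoidAlgebra.single z (1:ℂ)) • p ∈ P := P.smul_mem _ hp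
      simpa using hψP _ hmem
    have hinvf := hsol f hsolf g hg
    have hφq : φ (Submodule.Quotient.mk (p := P.restrictScalars ℂ) q) = ψ q := rfl
    rw [hφq]
    have hqsum : q = ∑ j, (Pi.single j (q j) : Fin k → A n) :=
      (Finset.univ_sum_single q).symm
    rw [hqsum, map_sum]
    apply Finset.sum_eq_zero
    intro j _
    have h1 := hinvf j (AddMonoidAlgebra.single (x j) 1)
    rw [actGL_single, fext_single, fext_single, one_mul, one_mul] at h1
    have h2 : (Pi.single j (q j) : Fin k → A n)
        = Pi.single j (AddMonoidAlgebra.single (x j) (1:ℂ))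
          - Pi.single j (AddMonoidAlgebra.single
              ((g : Matrix (Fin n) (Fin n) ℤ).mulVec (x j)) (1:ℂ)) := by
      rw [← Pi.single_sub, hq]
      simp [actGL_single]
    rw [h2, map_sub, fsingle, fsingle, one_mul, one_mul]
    rw [show f j (x j) = f j ((g : Matrix (Fin n) (Fin n) ℤ).mulVec (x j)) from h1.symm]
    ring
  · intro hmem f hsolf g hg j a
    have key : ∀ y : Fin n → ℤ,
        f j ((g : Matrix (Fin n) (Fin n) ℤ).mulVec y) = f j y := by
      intro y
      classical
      set x : Fin k → (Fin n → ℤ) := fun j' => if j' = j then y else 0 with hx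
      have hp := hmem x g hg
      have hz := congrFun (hsolf _ hp) 0
      rw [Finset.sum_apply] at hz
      have hterm : ∀ j' ∈ Finset.univ, j' ≠ j →
          ((AddMonoidAlgebra.single (x j') (1:ℂ)
            - actGL g (AddMonoidAlgebra.single (x j') 1)) • f j') 0 = 0 := by
        intro j' _ hne
        have hx0 : x j' = 0 := if_neg hne
        rw [hx0]
        have h1 : (AddMonoidAlgebra.single (0 : Fin n → ℤ) (1:ℂ) : A n) = 1 := by
          simp [AddMonoidAlgebra.one_def]
        rw [h1, map_one, sub_self, zero_smul]
        rfl
      rw [Finset.sum_eq_single_of_mem j (Finset.mem_univ j) hterm] at hz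
      have hxj : x j = y := if_pos rfl
      rw [hxj, actGL_single, sub_smul, Pi.sub_apply,
        single_smul_apply, single_smul_apply, one_mul, one_mul, zero_add, zero_add] at hz
      have hz' : f j y - f j ((g : Matrix (Fin n) (Fin n) ℤ).mulVec y) = 0 := by
        simpa using hz
      exact (sub_eq_zero.mp hz').symm
    rw [fext_eq_lc, fext_eq_lc]
    induction a using AddMonoidAlgebra.induction_linear with
    | zero => simp
    | add a b ha hb => rw [map_add, AddMonoidAlgebra.coeff_add, map_add, ha, hb, ← map_add, ← AddMonoidAlgebra.coeff_add]
    | single y c =>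
      rw [actGL_single]
      simp only [AddMonoidAlgebra.coeff_single, Finsupp.linearCombination_single]
      rw [key y]
end
end
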